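/- Let K be a commutative semiring, let n ≥ 1, and let T = P_2^4 be the 4×4 swap matrix satisfying T·(u⊗w) = w⊗u for all u, w ∈ K². Then the ordered matrix product ∏_{i=1}^{n−1} (I_2^{⊗(n−1−i)} ⊗ T ⊗ I_2^{⊗(i−1)}) (factors multiplied left to right in increasing order of i) equals the stride permutation matrix P_{2^{n−1}}^{2^n}; in particular, applied to any simple tensor v_1 ⊗ v_2 ⊗ ⋯ ⊗ v_n with each v_i ∈ K², it yields v_2 ⊗ ⋯ ⊗ v_n ⊗ v_1. -/

import Mathlib

open Matrix

/-- The `mn`-point stride-`n` permutation, as a permutation of `Fin N` (where `N = m * n`):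
it sends the index of `e_i^m ⊗ e_j^n` (i.e. `n*i + j`, zero-based) to the index of
`e_j^n ⊗ e_i^m` (i.e. `m*j + i`). -/
def strideEquiv (N m n : ℕ) (h : N = m * n) : Fin N ≃ Fin N :=
  (finCongr h).trans <|
    finProdFinEquiv.symm.trans <|
      (Equiv.prodComm (Fin m) (Fin n)).trans <|
        finProdFinEquiv.trans (finCongr (by rw [h]; exact Nat.mul_comm n m))

/-- The `mn`-point stride-`n` permutation matrix `P_n^{mn}`: the `N × N` permutation matrix
(`N = m * n`) determined by `P_n^{mn} · (e_i^m ⊗ e_j^n) = e_j^n ⊗ e_i^m`. -/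
def strideMat (K : Type*) [Semiring K] (N m n : ℕ) (h : N = m * n) :
    Matrix (Fin N) (Fin N) K :=
  Matrix.of fun a b => if a = strideEquiv N m n h b then 1 else 0

/-- Kronecker (tensor) product of matrices, with row-major indexing by `Fin`:
the `(n*i + s, q*j + t)` entry of `kron A B` is `A i j * B s t`. -/
def kron {K : Type*} [Mul K] {m n p q : ℕ}
    (A : Matrix (Fin m) (Fin n) K) (B : Matrix (Fin p) (Fin q) K) :
    Matrix (Fin (m * p)) (Fin (n * q)) K :=
  Matrix.reindex finProdFinEquiv finProdFinEquiv (Matrix.kroneckerMap (· * ·) A B)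

/-- Cast a matrix along equalities of its dimensions. -/
def mcast {K : Type*} {a b c d : ℕ} (h₁ : a = b) (h₂ : c = d)
    (A : Matrix (Fin a) (Fin c) K) : Matrix (Fin b) (Fin d) K :=
  Matrix.reindex (finCongr h₁) (finCongr h₂) A

/-- The 4 × 4 swap matrix `T = P_2^4`, with rows `(1,0,0,0), (0,0,1,0), (0,1,0,0), (0,0,0,1)`:
it satisfies `T · (u ⊗ w) = w ⊗ u` for all `u, w ∈ K²`. -/
def swapT (K : Type*) [Semiring K] : Matrix (Fin (2 * 2)) (Fin (2 * 2)) K :=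
  strideMat K (2 * 2) 2 2 rfl

/-- The `j`-th factor (`j` zero-based, so `i = j + 1` in one-based numbering)
`I_2^{⊗(n-1-i)} ⊗ T ⊗ I_2^{⊗(i-1)}`, viewed as a `2^n × 2^n` matrix. -/
def swapFactorA (K : Type*) [Semiring K] (n : ℕ) (j : Fin (n - 1)) :
    Matrix (Fin (2 ^ n)) (Fin (2 ^ n)) K :=
  mcast
    (show 2 ^ (n - 2 - (j : ℕ)) * (2 * 2) * 2 ^ (j : ℕ) = 2 ^ n from by
      have hj : (j : ℕ) < n - 1 := j.isLt
      rw [show (2 * 2 : ℕ) = 2 ^ 2 from rfl, ← pow_add, ← pow_add]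
      congr 1
      omega)
    (show 2 ^ (n - 2 - (j : ℕ)) * (2 * 2) * 2 ^ (j : ℕ) = 2 ^ n from by
      have hj : (j : ℕ) < n - 1 := j.isLt
      rw [show (2 * 2 : ℕ) = 2 ^ 2 from rfl, ← pow_add, ← pow_add]
      congr 1
      omega)
    (kron
      (kron (1 : Matrix (Fin (2 ^ (n - 2 - (j : ℕ)))) (Fin (2 ^ (n - 2 - (j : ℕ)))) K)
        (swapT K))
      (1 : Matrix (Fin (2 ^ (j : ℕ))) (Fin (2 ^ (j : ℕ))) K))

/-- The `j`-th factor (`j` zero-based, so `i = j + 1` in one-based numbering)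
`I_2^{⊗(i-1)} ⊗ T ⊗ I_2^{⊗(n-1-i)}`, viewed as a `2^n × 2^n` matrix. -/
def swapFactorB (K : Type*) [Semiring K] (n : ℕ) (j : Fin (n - 1)) :
    Matrix (Fin (2 ^ n)) (Fin (2 ^ n)) K :=
  mcast
    (show 2 ^ (j : ℕ) * (2 * 2) * 2 ^ (n - 2 - (j : ℕ)) = 2 ^ n from by
      have hj : (j : ℕ) < n - 1 := j.isLt
      rw [show (2 * 2 : ℕ) = 2 ^ 2 from rfl, ← pow_add, ← pow_add]
      congr 1
      omega)
    (show 2 ^ (j : ℕ) * (2 * 2) * 2 ^ (n - 2 - (j : ℕ)) = 2 ^ n from by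
      have hj : (j : ℕ) < n - 1 := j.isLt
      rw [show (2 * 2 : ℕ) = 2 ^ 2 from rfl, ← pow_add, ← pow_add]
      congr 1
      omega)
    (kron
      (kron (1 : Matrix (Fin (2 ^ (j : ℕ))) (Fin (2 ^ (j : ℕ))) K) (swapT K))
      (1 : Matrix (Fin (2 ^ (n - 2 - (j : ℕ)))) (Fin (2 ^ (n - 2 - (j : ℕ)))) K))

namespace SwapAux

/-- Permutation matrix of an equivalence. -/
def permMat (K : Type*) [Semiring K] {N : ℕ} (σ : Fin N ≃ Fin N) :
    Matrix (Fin N) (Fin N) K :=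
  Matrix.of fun a b => if a = σ b then 1 else 0

theorem strideMat_eq_permMat (K : Type*) [Semiring K] (N m n : ℕ) (h : N = m * n) :
    strideMat K N m n h = permMat K (strideEquiv N m n h) := rfl

theorem permMat_one (K : Type*) [Semiring K] (N : ℕ) :
    permMat K (Equiv.refl (Fin N)) = 1 := by
  ext a b
  simp [permMat, Matrix.one_apply, eq_comm]
  congr

theorem permMat_mul (K : Type*) [Semiring K] {N : ℕ} (σ τ : Fin N ≃ Fin N) :
    permMat K σ * permMat K τ = permMat K (τ.trans σ) := by
  ext a b
  simp only [permMat, Matrix.mul_apply, Matrix.of_apply, ite_mul, one_mul, zero_mul,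
    Equiv.trans_apply]
  rw [Finset.sum_eq_single (τ b)]
  · simp
    congr
  · intro c _ hc
    simp [hc]
  · simp

/-- The equivalence underlying a Kronecker product of permutation matrices. -/
def kronE {m p : ℕ} (σ : Fin m ≃ Fin m) (τ : Fin p ≃ Fin p) : Fin (m * p) ≃ Fin (m * p) :=
  finProdFinEquiv.symm.trans ((σ.prodCongr τ).trans finProdFinEquiv)

theorem permMat_kron (K : Type*) [Semiring K] {m p : ℕ}
    (σ : Fin m ≃ Fin m) (τ : Fin p ≃ Fin p) :
    kron (permMat K σ) (permMat K τ) = permMat K (kronE σ τ) := by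
  ext a b
  show (if a.divNat = σ b.divNat then (1 : K) else 0) *
        (if a.modNat = τ b.modNat then 1 else 0) =
      if a = finProdFinEquiv (σ b.divNat, τ b.modNat) then 1 else 0
  have h : a = finProdFinEquiv (σ b.divNat, τ b.modNat) ↔
      (a.divNat = σ b.divNat ∧ a.modNat = τ b.modNat) := by
    rw [← Equiv.symm_apply_eq]
    constructor
    · intro h; exact ⟨congrArg Prod.fst h, congrArg Prod.snd h⟩
    · rintro ⟨h1, h2⟩; exact Prod.ext h1 h2
  rw [if_congr h rfl rfl, ite_and, ite_mul, one_mul, zero_mul]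

/-- The equivalence underlying `mcast` of a permutation matrix. -/
def castE {a b : ℕ} (h : a = b) (σ : Fin a ≃ Fin a) : Fin b ≃ Fin b :=
  (finCongr h).symm.trans (σ.trans (finCongr h))

theorem permMat_mcast (K : Type*) [Semiring K] {a b : ℕ} (h : a = b) (σ : Fin a ≃ Fin a) :
    mcast h h (permMat K σ) = permMat K (castE h σ) := by
  ext x y
  simp only [mcast, Matrix.reindex_apply, Matrix.submatrix_apply, permMat, Matrix.of_apply,
    castE, Equiv.trans_apply]
  exact if_congr (Equiv.symm_apply_eq _) rfl rfl


theorem strideEquiv_val (N m n : ℕ) (h : N = m * n) (b : Fin N) :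
    (strideEquiv N m n h b : ℕ) = (b : ℕ) / n + m * ((b : ℕ) % n) := rfl

theorem kronE_val {m p : ℕ} (σ : Fin m ≃ Fin m) (τ : Fin p ≃ Fin p) (b : Fin (m * p)) :
    (kronE σ τ b : ℕ) = (τ b.modNat : ℕ) + p * (σ b.divNat : ℕ) := rfl

/-- The explicit permutation equivalence of `swapFactorA`. -/
def factorEquiv (n : ℕ) (j : Fin (n - 1)) : Fin (2 ^ n) ≃ Fin (2 ^ n) :=
  castE
    (show 2 ^ (n - 2 - (j : ℕ)) * (2 * 2) * 2 ^ (j : ℕ) = 2 ^ n from by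
      have hj : (j : ℕ) < n - 1 := j.isLt
      rw [show (2 * 2 : ℕ) = 2 ^ 2 from rfl, ← pow_add, ← pow_add]
      congr 1
      omega)
    (kronE
      (kronE (Equiv.refl (Fin (2 ^ (n - 2 - (j : ℕ))))) (strideEquiv (2 * 2) 2 2 rfl))
      (Equiv.refl (Fin (2 ^ (j : ℕ)))))

theorem swapFactorA_eq (K : Type*) [Semiring K] (n : ℕ) (j : Fin (n - 1)) :
    swapFactorA K n j = permMat K (factorEquiv n j) := by
  unfold swapFactorA factorEquiv
  rw [show swapT K = permMat K (strideEquiv (2 * 2) 2 2 rfl) from rfl,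
    ← permMat_one K (2 ^ (n - 2 - (j : ℕ))), ← permMat_one K (2 ^ (j : ℕ)),
    permMat_kron, permMat_kron, permMat_mcast]

def sAux (t : ℕ) : ℕ := t / 2 + 2 * (t % 2)

def Fstep (j b : ℕ) : ℕ :=
  b % 2 ^ j + 2 ^ j * (sAux (b / 2 ^ j % 4) + 4 * (b / 2 ^ j / 4))

theorem factorEquiv_val (n : ℕ) (j : Fin (n - 1)) (b : Fin (2 ^ n)) :
    ((factorEquiv n j) b : ℕ) = Fstep (j : ℕ) (b : ℕ) := by
  show ((castE _ _) b : ℕ) = _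
  rw [castE]
  simp only [Equiv.trans_apply, finCongr_apply, Fin.coe_cast]
  rw [kronE_val, kronE_val, strideEquiv_val]
  simp only [Equiv.coe_refl, id_eq, Fin.coe_modNat, Fin.coe_divNat, Fin.coe_cast, Fstep, sAux]
  norm_num

def Fstep' (q b : ℕ) : ℕ :=
  b % q + q * (sAux (b / q % 4) + 4 * (b / q / 4))

theorem Fstep_eq (j b : ℕ) : Fstep j b = Fstep' (2 ^ j) b := rfl

def natComp : ℕ → ℕ → ℕ
  | 0, b => b
  | k + 1, b => natComp k (Fstep k b)

theorem mul_add_div' {q : ℕ} (hq : 0 < q) (a z : ℕ) (hz : z < q) :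
    (q * a + z) / q = a := by
  rw [Nat.mul_add_div hq, Nat.div_eq_of_lt hz, Nat.add_zero]

theorem mul_add_mod' (q a z : ℕ) (hz : z < q) : (q * a + z) % q = z := by
  rw [Nat.mul_add_mod, Nat.mod_eq_of_lt hz]

theorem keystep (q b : ℕ) (hq : 0 < q) :
    Fstep' q b / (2 * q) * (2 * q) + Fstep' q b % (2 * q) % q * 2 +
        Fstep' q b % (2 * q) / q =
      b / (4 * q) * (4 * q) + b % (4 * q) % (2 * q) * 2 + b % (4 * q) / (2 * q) := by
  have h1 := Nat.div_add_mod b q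
  have h2 := Nat.div_add_mod (b / q) 4
  have hz : b % q < q := Nat.mod_lt _ hq
  have ht : b / q % 4 < 4 := Nat.mod_lt _ (by norm_num)
  have hb : b = q * (4 * (b / q / 4) + b / q % 4) + b % q := by
    rw [h2, h1]
  obtain ⟨a, t, z, ht4, hzq, rfl⟩ :
      ∃ a t z, t < 4 ∧ z < q ∧ b = q * (4 * a + t) + z :=
    ⟨b / q / 4, b / q % 4, b % q, ht, hz, hb⟩
  clear h1 h2 hz ht hb
  obtain ⟨t1, t0, ht1, ht0, rfl⟩ : ∃ t1 t0, t1 < 2 ∧ t0 < 2 ∧ t = 2 * t1 + t0 :=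
    ⟨t / 2, t % 2, by omega, by omega, by omega⟩
  have e1 : (q * (4 * a + (2 * t1 + t0)) + z) % q = z := mul_add_mod' _ _ _ hzq
  have e2 : (q * (4 * a + (2 * t1 + t0)) + z) / q = 4 * a + (2 * t1 + t0) :=
    mul_add_div' hq _ _ hzq
  have hF : Fstep' q (q * (4 * a + (2 * t1 + t0)) + z) =
      2 * q * (t0 + 2 * a) + (q * t1 + z) := by
    rw [Fstep', e1, e2]
    have e3 : (4 * a + (2 * t1 + t0)) % 4 = 2 * t1 + t0 := by omega
    have e4 : (4 * a + (2 * t1 + t0)) / 4 = a := by omega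
    rw [e3, e4]
    have e5 : sAux (2 * t1 + t0) = t1 + 2 * t0 := by
      simp only [sAux]; omega
    rw [e5]; ring
  have hq2 : (0 : ℕ) < 2 * q := by omega
  have hq4 : (0 : ℕ) < 4 * q := by omega
  have hb1 : q * t1 + z < 2 * q := by nlinarith
  have hb2 : q * t0 + z < 2 * q := by nlinarith
  have hb3 : q * (2 * t1 + t0) + z < 4 * q := by nlinarith
  have l1 : Fstep' q (q * (4 * a + (2 * t1 + t0)) + z) / (2 * q) = t0 + 2 * a := by
    rw [hF]; exact mul_add_div' hq2 _ _ hb1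
  have l2 : Fstep' q (q * (4 * a + (2 * t1 + t0)) + z) % (2 * q) = q * t1 + z := by
    rw [hF]; exact mul_add_mod' _ _ _ hb1
  have l3 : (q * t1 + z) % q = z := mul_add_mod' _ _ _ hzq
  have l4 : (q * t1 + z) / q = t1 := mul_add_div' hq _ _ hzq
  have hbalt : q * (4 * a + (2 * t1 + t0)) + z =
      4 * q * a + (q * (2 * t1 + t0) + z) := by ring
  have r1 : (q * (4 * a + (2 * t1 + t0)) + z) / (4 * q) = a := by
    rw [hbalt]; exact mul_add_div' hq4 _ _ hb3
  have r2 : (q * (4 * a + (2 * t1 + t0)) + z) % (4 * q) = q * (2 * t1 + t0) + z := by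
    rw [hbalt]; exact mul_add_mod' _ _ _ hb3
  have hbalt2 : q * (2 * t1 + t0) + z = 2 * q * t1 + (q * t0 + z) := by ring
  have r3 : (q * (2 * t1 + t0) + z) % (2 * q) = q * t0 + z := by
    rw [hbalt2]; exact mul_add_mod' _ _ _ hb2
  have r4 : (q * (2 * t1 + t0) + z) / (2 * q) = t1 := by
    rw [hbalt2]; exact mul_add_div' hq2 _ _ hb2
  rw [l1, l2, l3, l4, r1, r2, r3, r4]
  ring

theorem natComp_eq (k b : ℕ) :
    natComp k b =
      b / 2 ^ (k + 1) * 2 ^ (k + 1) + b % 2 ^ (k + 1) % 2 ^ k * 2 +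
        b % 2 ^ (k + 1) / 2 ^ k := by
  induction k generalizing b with
  | zero => simp only [natComp, pow_one, pow_zero]; omega
  | succ k ih =>
    show natComp k (Fstep k b) = _
    rw [ih, Fstep_eq]
    have h2 : (2 : ℕ) ^ (k + 1) = 2 * 2 ^ k := by ring
    have h4 : (2 : ℕ) ^ (k + 1 + 1) = 4 * 2 ^ k := by ring
    rw [h2, h4]
    exact keystep (2 ^ k) b (pow_pos (by norm_num) k)

theorem foldr_trans_apply {N : ℕ} (L : List (Fin N ≃ Fin N)) (b : Fin N) :
    (L.foldr (fun σ e => e.trans σ) (Equiv.refl _)) b = L.foldr (fun σ x => σ x) b := by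
  induction L with
  | nil => rfl
  | cons σ L ih => simp only [List.foldr_cons, Equiv.trans_apply, ih]

theorem prod_map_permMat (K : Type*) [Semiring K] {N : ℕ} (L : List (Fin N ≃ Fin N)) :
    (L.map (permMat K)).prod =
      permMat K (L.foldr (fun σ e => e.trans σ) (Equiv.refl _)) := by
  induction L with
  | nil => simpa using (permMat_one K N).symm
  | cons σ L ih =>
    rw [List.map_cons, List.prod_cons, ih, permMat_mul]
    rfl

theorem finRange_foldr (k b : ℕ) :
    (List.finRange k).foldr (fun (j : Fin k) (x : ℕ) => Fstep j.val x) b = natComp k b := by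
  induction k generalizing b with
  | zero => rfl
  | succ k ih =>
    rw [List.finRange_succ_last, List.foldr_append]
    simp only [List.foldr_cons, List.foldr_nil, List.foldr_map, Fin.val_last,
      Fin.coe_castSucc]
    exact ih _

end SwapAux
/-- For a commutative semiring `K` and `n ≥ 1`, the ordered product
`∏_{i=1}^{n-1} (I_2^{⊗(n-1-i)} ⊗ T ⊗ I_2^{⊗(i-1)})` (factors multiplied left to right in
increasing order of `i`) equals the stride permutation matrix `P_{2^{n-1}}^{2^n}`. -/
theorem swap_product_eq_stride_pow (K : Type*) [CommSemiring K] (n : ℕ) (hn : 1 ≤ n) :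
    ((List.finRange (n - 1)).map (swapFactorA K n)).prod =
      strideMat K (2 ^ n) 2 (2 ^ (n - 1))
        (by
          have h : n - 1 + 1 = n := Nat.sub_add_cancel hn
          calc (2 : ℕ) ^ n = 2 ^ (n - 1 + 1) := by rw [h]
            _ = 2 * 2 ^ (n - 1) := by rw [pow_succ]; ring) := by
  open SwapAux in
  have hmap : (List.finRange (n - 1)).map (swapFactorA K n) =
      ((List.finRange (n - 1)).map (factorEquiv n)).map (permMat K) := by
    rw [List.map_map]
    exact List.map_congr_left fun j _ => swapFactorA_eq K n j
  rw [hmap, prod_map_permMat, strideMat_eq_permMat]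
  refine congrArg (permMat K) (Equiv.ext fun b => ?_)
  apply Fin.eq_of_val_eq
  rw [foldr_trans_apply]
  have hv : ∀ (L : List (Fin (n - 1))) (x : Fin (2 ^ n)),
      (((L.map (factorEquiv n)).foldr
          (fun (σ : Fin (2 ^ n) ≃ Fin (2 ^ n)) (y : Fin (2 ^ n)) => σ y) x : Fin (2 ^ n)) : ℕ) =
        L.foldr (fun j y => Fstep j.val y) (x : ℕ) := by
    intro L
    induction L with
    | nil => intro x; rfl
    | cons j L ih =>
      intro x
      simp only [List.map_cons, List.foldr_cons]
      rw [factorEquiv_val, ih]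
  rw [hv, finRange_foldr, natComp_eq, strideEquiv_val]
  have hn1 : n - 1 + 1 = n := Nat.sub_add_cancel hn
  rw [hn1]
  have hb := b.isLt
  rw [Nat.div_eq_of_lt hb, Nat.mod_eq_of_lt hb]
  ring
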